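/- arXiv:1601.01913 — 3 statements merged into one kernel-verified Lean document; each statement's English description precedes it below -/
import Mathlib

section
/- The Appell–Lerch function satisfies m(x,q,z) = x^{-1} m(x^{-1}, q, z^{-1}) for generic nonzero x,z. -/
open Complex

noncomputable def qp (q a : ℂ) : ℂ := ∏' i : ℕ, (1 - a * q ^ i)

noncomputable def jt (x q : ℂ) : ℂ := qp q x * qp q (q / x) * qp q q

noncomputable def al (x q z : ℂ) : ℂ :=
  (jt z q)⁻¹ *
    ∑' r : ℤ, (-1 : ℂ) ^ r * q ^ (r * (r - 1) / 2) * z ^ r / (1 - q ^ (r - 1) * x * z)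

lemma qp_eq_zero {q a : ℂ} {i : ℕ} (h : 1 - a * q ^ i = 0) : qp q a = 0 := by
  have : HasProd (fun i : ℕ => 1 - a * q ^ i) 0 := by
    rw [HasProd]
    apply Filter.Tendsto.congr' (f₁ := fun _ => (0:ℂ)) _ tendsto_const_nhds
    filter_upwards [Filter.eventually_ge_atTop ({i} : Finset ℕ)] with s hs
    exact (Finset.prod_eq_zero (hs (Finset.mem_singleton_self i)) h).symm
  exact this.tprod_eq

lemma qp_mult {q a : ℂ} (hq1 : ‖q‖ < 1) (h : ∀ i : ℕ, 1 - a * q ^ i ≠ 0) :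
    Multipliable (fun i : ℕ => 1 - a * q ^ i) := by
  apply Complex.multipliable_of_summable_log
  have hsum : Summable (fun i : ℕ => (3/2 : ℝ) * (‖a‖ * ‖q‖ ^ i)) := by
    apply Summable.mul_left
    apply Summable.mul_left
    exact summable_geometric_of_lt_one (norm_nonneg q) hq1
  apply Summable.of_norm_bounded_eventually hsum
  have h0 : Filter.Tendsto (fun i : ℕ => ‖a * q ^ i‖) Filter.atTop (nhds 0) := by
    have := (tendsto_pow_atTop_nhds_zero_of_norm_lt_one (x := q) (by simpa using hq1)).const_mul a
    simpa using this.norm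
  have hev : ∀ᶠ i in Filter.atTop, ‖a * q ^ i‖ ≤ 1/2 :=
    (h0.eventually_lt_const (by norm_num)).mono fun i hi => hi.le
  rw [Nat.cofinite_eq_atTop]
  filter_upwards [hev] with i hi
  have := Complex.norm_log_one_add_half_le_self (z := -(a * q ^ i)) (by simpa using hi)
  rw [show (1 : ℂ) + -(a * q ^ i) = 1 - a * q ^ i by ring] at this
  calc ‖Complex.log (1 - a * q ^ i)‖ ≤ 3/2 * ‖-(a * q ^ i)‖ := this
    _ = 3/2 * (‖a‖ * ‖q‖ ^ i) := by
        simp [norm_mul, norm_pow]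

lemma qp_shift {q a : ℂ} (hq1 : ‖q‖ < 1) (h : ∀ i : ℕ, 1 - a * q ^ i ≠ 0) :
    qp q a = (1 - a) * qp q (q * a) := by
  have hm : Multipliable (fun i : ℕ => 1 - (q * a) * q ^ i) :=
    qp_mult hq1 (fun i => by rw [show q * a * q ^ i = a * q ^ (i+1) by ring]; exact h (i+1))
  have key : ∏' i : ℕ, (1 - a * q ^ i) = (1 - a * q ^ 0) * ∏' i : ℕ, (1 - a * q ^ (i+1)) := by
    apply tprod_eq_zero_mul'
    exact hm.congr (fun i => by ring_nf)
  rw [qp, key, qp]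
  norm_num
  left
  exact tprod_congr (fun i => by ring)

lemma jt_factor_ne {x q : ℂ} (h : jt x q ≠ 0) : ∀ i : ℕ, 1 - x * q ^ i ≠ 0 := by
  intro i hi
  exact h (by rw [jt, qp_eq_zero hi]; ring)

lemma jt_inv {q z : ℂ} (hq1 : ‖q‖ < 1) (hz : z ≠ 0)
    (hjz : jt z q ≠ 0) (hjzi : jt z⁻¹ q ≠ 0) : jt z⁻¹ q = -z⁻¹ * jt z q := by
  have h1 : ∀ i : ℕ, 1 - z * q ^ i ≠ 0 := jt_factor_ne hjz
  have h2 : ∀ i : ℕ, 1 - z⁻¹ * q ^ i ≠ 0 := jt_factor_ne hjzi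
  have e1 : qp q z = (1 - z) * qp q (q * z) := qp_shift hq1 h1
  have e2 : qp q z⁻¹ = (1 - z⁻¹) * qp q (q * z⁻¹) := qp_shift hq1 h2
  rw [jt, jt, e1, e2]
  rw [show q / z⁻¹ = q * z by field_simp, show q * z⁻¹ = q / z by field_simp]
  have : (1 : ℂ) - z⁻¹ = -z⁻¹ * (1 - z) := by field_simp; ring
  rw [this]; ring

lemma neg_one_zpow_sub (r : ℤ) : ((-1:ℂ)) ^ (2 - r) = (-1) ^ r := by
  rcases Int.even_or_odd r with h | h
  · rw [h.neg_one_zpow, (by simp [Int.even_sub, h] : Even (2 - r)).neg_one_zpow]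
  · rw [h.neg_one_zpow,
      (by rw [Int.odd_sub]; simp [Int.not_even_iff_odd.2 h, (by decide : ¬ Odd (2:ℤ))] : Odd (2 - r)).neg_one_zpow]

lemma exp_eq (r : ℤ) : (2 - r) * (2 - r - 1) / 2 = r * (r - 1) / 2 + (1 - r) := by
  obtain ⟨k, hk⟩ : Even (r * (r - 1)) := Int.even_mul_pred_self r
  have h2 : (2 - r) * (2 - r - 1) = 2 * (k + (1 - r)) := by linear_combination hk
  have h3 : r * (r - 1) = 2 * k := by linarith
  rw [h2, h3, Int.mul_ediv_cancel_left _ (by norm_num), Int.mul_ediv_cancel_left _ (by norm_num)]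

lemma term_eq (q x z : ℂ) (hq : q ≠ 0) (hx : x ≠ 0) (hz : z ≠ 0)
    (hden : ∀ r : ℤ, q ^ r * x * z ≠ 1) (r : ℤ) :
    (-1:ℂ) ^ (2 - r) * q ^ ((2 - r) * (2 - r - 1) / 2) * (z⁻¹) ^ (2 - r) /
      (1 - q ^ (2 - r - 1) * x⁻¹ * z⁻¹)
    = (-x * z⁻¹) * ((-1:ℂ) ^ r * q ^ (r * (r - 1) / 2) * z ^ r / (1 - q ^ (r - 1) * x * z)) := by
  have hd1 : (1:ℂ) - q ^ (r - 1) * x * z ≠ 0 := sub_ne_zero_of_ne (Ne.symm (hden (r - 1)))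
  have hqq : q ^ ((1:ℤ) - r) * q ^ (r - 1) = 1 := by
    rw [← zpow_add₀ hq]; norm_num
  have hkey : (1:ℂ) - q ^ ((1:ℤ) - r) * x⁻¹ * z⁻¹
      = -(q ^ ((1:ℤ) - r) * x⁻¹ * z⁻¹) * (1 - q ^ (r - 1) * x * z) := by
    have : -(q ^ ((1:ℤ)-r) * x⁻¹ * z⁻¹) * (1 - q ^ (r-1) * x * z)
        = -(q ^ ((1:ℤ)-r) * x⁻¹ * z⁻¹) + (q ^ ((1:ℤ)-r) * q ^ (r-1)) * (x⁻¹ * x) * (z⁻¹ * z) := by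
      ring
    rw [this, hqq, inv_mul_cancel₀ hx, inv_mul_cancel₀ hz]; ring
  have hd2 : (1:ℂ) - q ^ ((1:ℤ) - r) * x⁻¹ * z⁻¹ ≠ 0 := by
    rw [hkey]
    exact mul_ne_zero (neg_ne_zero.mpr (mul_ne_zero (mul_ne_zero (zpow_ne_zero _ hq)
      (inv_ne_zero hx)) (inv_ne_zero hz))) hd1
  rw [exp_eq, neg_one_zpow_sub, show (2:ℤ) - r - 1 = 1 - r by ring, zpow_add₀ hq,
    inv_zpow, ← zpow_neg, show -((2:ℤ) - r) = r + (-2) by ring, zpow_add₀ hz,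
    show (-x * z⁻¹) * ((-1:ℂ) ^ r * q ^ (r * (r - 1) / 2) * z ^ r / (1 - q ^ (r - 1) * x * z))
      = ((-x * z⁻¹) * ((-1:ℂ) ^ r * q ^ (r * (r - 1) / 2) * z ^ r)) / (1 - q ^ (r - 1) * x * z)
      from (mul_div_assoc _ _ _).symm,
    div_eq_div_iff hd2 hd1, hkey]
  have hz2 : z ^ (-2 : ℤ) = (z ^ (2:ℕ))⁻¹ := by rw [zpow_neg]; norm_cast
  rw [hz2]
  field_simp

/-- `m(x,q,z) = x⁻¹ m(x⁻¹,q,z⁻¹)` for generic `x,z`. -/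
theorem stmt8 (q x z : ℂ) (hq0 : 0 < ‖q‖) (hq1 : ‖q‖ < 1)
    (hx : x ≠ 0) (hz : z ≠ 0)
    (hjz : jt z q ≠ 0) (hjzi : jt z⁻¹ q ≠ 0)
    (hden : ∀ r : ℤ, q ^ r * x * z ≠ 1) :
    al x q z = x⁻¹ * al x⁻¹ q z⁻¹ := by
  have hq : q ≠ 0 := by
    intro h; rw [h] at hq0; simp at hq0
  have hjti := jt_inv hq1 hz hjz hjzi
  have hS : (∑' s : ℤ, (-1:ℂ) ^ s * q ^ (s * (s - 1) / 2) * (z⁻¹) ^ s /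
        (1 - q ^ (s - 1) * x⁻¹ * z⁻¹))
      = (-x * z⁻¹) *
        ∑' r : ℤ, (-1:ℂ) ^ r * q ^ (r * (r - 1) / 2) * z ^ r / (1 - q ^ (r - 1) * x * z) := by
    rw [← tsum_mul_left,
      ← (Equiv.subLeft (2:ℤ)).tsum_eq (fun s : ℤ => (-1:ℂ) ^ s * q ^ (s * (s - 1) / 2) *
        (z⁻¹) ^ s / (1 - q ^ (s - 1) * x⁻¹ * z⁻¹))]
    exact tsum_congr (fun r => term_eq q x z hq hx hz hden r)
  rw [al, al, hS, hjti, mul_inv]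
  have hzi : (-z⁻¹ : ℂ)⁻¹ = -z := by field_simp
  rw [hzi]
  set S := ∑' r : ℤ, (-1:ℂ) ^ r * q ^ (r * (r - 1) / 2) * z ^ r / (1 - q ^ (r - 1) * x * z) with hSdef
  clear_value S
  field_simp
end

section
/- Suppose H(x) is analytic on ℂ\{0\} and satisfies H(q^2 x) = (xq/(yz)) H(x) for all x ≠ 0, where 0<|q|<1 and y,z are fixed nonzero constants. Then H is identically zero. -/
open Complex Filter Topology Bornology

private lemma stmt15_tendsto {r : ℝ} (h0 : 0 ≤ r) (h1 : r < 1) (C : ℝ) :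
    Tendsto (fun k : ℕ => r^(k*k) * C^k) atTop (𝓝 0) := by
  have heq : ∀ k : ℕ, |r^(k*k) * C^k| = (r^k * |C|)^k := by
    intro k
    have hr : |r| = r := abs_of_nonneg (a := r) h0
    rw [abs_mul, _root_.abs_pow, _root_.abs_pow, hr, mul_pow, ← pow_mul]
  have h2 : Tendsto (fun k : ℕ => r^k * |C|) atTop (𝓝 0) := by
    simpa using (tendsto_pow_atTop_nhds_zero_of_lt_one h0 h1).mul_const |C|
  have h3 : ∀ᶠ k in atTop, r^k * |C| ≤ 1/2 := h2.eventually_le_const (by norm_num)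
  have h4 : Tendsto (fun k : ℕ => |r^(k*k) * C^k|) atTop (𝓝 0) := by
    apply squeeze_zero' (Eventually.of_forall fun k => abs_nonneg _)
      (h3.mono fun k hk => ?_)
      (tendsto_pow_atTop_nhds_zero_of_lt_one (by norm_num : (0:ℝ) ≤ 1/2) (by norm_num))
    rw [heq k]
    exact pow_le_pow_left₀ (by positivity) hk k
  exact (tendsto_zero_iff_abs_tendsto_zero _).mpr h4

/-- Rigidity: an entire-on-`ℂ \ {0}` function satisfying `H(q²x) = (xq/(yz)) H(x)`
vanishes identically on `ℂ \ {0}`. -/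
theorem stmt15 (q y z : ℂ) (hq0 : 0 < ‖q‖) (hq1 : ‖q‖ < 1)
    (hy : y ≠ 0) (hz : z ≠ 0) (H : ℂ → ℂ)
    (hH : ∀ x : ℂ, x ≠ 0 → AnalyticAt ℂ H x)
    (hfe : ∀ x : ℂ, x ≠ 0 → H (q ^ 2 * x) = x * q / (y * z) * H x) :
    ∀ x : ℂ, x ≠ 0 → H x = 0 := by
  have hq : q ≠ 0 := by
    intro h; rw [h] at hq0; simp at hq0
  have hyz : y * z ≠ 0 := mul_ne_zero hy hz
  set r := ‖q‖ with hrdef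
  set c := ‖y * z‖ with hcdef
  have hc0 : 0 < c := norm_pos_iff.mpr hyz
  -- iteration lemma
  have iter : ∀ (n : ℕ) (x : ℂ), x ≠ 0 →
      H ((q^2)^n * x) = x^n * q^(n*n) / (y*z)^n * H x := by
    intro n
    induction n with
    | zero => intro x hx; simp
    | succ n ih =>
      intro x hx
      have hx' : (q^2)^n * x ≠ 0 := mul_ne_zero (pow_ne_zero _ (pow_ne_zero _ hq)) hx
      have h1 : (q^2)^(n+1) * x = q^2 * ((q^2)^n * x) := by ring
      rw [h1, hfe _ hx', ih x hx]
      have h2 : (n+1)*(n+1) = n*n + (2*n+1) := by ring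
      rw [h2, pow_add]
      field_simp
      ring
  -- bound on the annulus
  set A : Set ℂ := (fun w : ℂ => ‖w‖) ⁻¹' (Set.Icc (r^2) 1) with hAdef
  have hAne : ∀ w ∈ A, w ≠ 0 := by
    intro w hw h0
    rw [h0] at hw
    simp only [hAdef, Set.mem_preimage, norm_zero, Set.mem_Icc] at hw
    nlinarith [hw.1]
  have hAcomp : IsCompact A := by
    apply Metric.isCompact_of_isClosed_isBounded
    · exact isClosed_Icc.preimage continuous_norm
    · apply (Metric.isBounded_closedBall (x := (0:ℂ)) (r := 1)).subset
      intro w hw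
      simp only [hAdef, Set.mem_preimage, Set.mem_Icc] at hw
      simpa using hw.2
  have hcont : ContinuousOn H A := fun w hw =>
    ((hH w (hAne w hw)).continuousAt).continuousWithinAt
  obtain ⟨M, hM⟩ := hAcomp.exists_bound_of_continuousOn hcont
  set M' := max M 0 with hM'def
  have hM'0 : 0 ≤ M' := le_max_right _ _
  have hMA : ∀ w ∈ A, ‖H w‖ ≤ M' := fun w hw => (hM w hw).trans (le_max_left _ _)
  -- bounds on the two sequences
  obtain ⟨B1, hB1⟩ := ((stmt15_tendsto (le_of_lt hq0) hq1 (1/c)).bddAbove_range)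
  obtain ⟨B2, hB2⟩ := ((stmt15_tendsto (le_of_lt hq0) hq1 c).bddAbove_range)
  have hB1' : ∀ k : ℕ, r^(k*k) * (1/c)^k ≤ B1 := fun k => hB1 (Set.mem_range_self k)
  have hB2' : ∀ k : ℕ, r^(k*k) * c^k ≤ B2 := fun k => hB2 (Set.mem_range_self k)
  set B : ℝ := max (M' * B1) (M' * c / r * B2) with hBdef
  -- the global bound
  have hbound : ∀ w : ℂ, w ≠ 0 → ‖H w‖ ≤ B := by
    intro w hw
    have ht : 0 < ‖w‖ := norm_pos_iff.mpr hw
    set s : ℝ := r^2 with hsdef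
    have hs0 : 0 < s := by positivity
    have hs1 : s < 1 := by nlinarith
    obtain ⟨n, hn1, hn2⟩ := exists_mem_Ioc_zpow ht ((one_lt_inv₀ hs0).mpr hs1)
    -- hn1 : s⁻¹ ^ n < abs w ; hn2 : abs w ≤ s⁻¹ ^ (n+1)
    obtain ⟨m, hmdef⟩ : ∃ m : ℤ, m = -(n+1) := ⟨_, rfl⟩
    have hm2 : ‖w‖ ≤ s ^ m := by
      rw [hmdef, zpow_neg, ← inv_zpow]
      exact hn2
    have hm1 : s ^ (m+1) < ‖w‖ := by
      have : m + 1 = -n := by omega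
      rw [this, zpow_neg, ← inv_zpow]
      exact hn1
    set x : ℂ := (q^2)^(-m) * w with hxdef
    have hq2 : (q:ℂ)^2 ≠ 0 := pow_ne_zero _ hq
    have hx0 : x ≠ 0 := mul_ne_zero (zpow_ne_zero _ hq2) hw
    have habsq2 : ‖q^2‖ = s := by rw [norm_pow]
    have hxabs : ‖x‖ = s^(-m) * ‖w‖ := by
      rw [hxdef, norm_mul, norm_zpow, habsq2]
    have hspow : ∀ j : ℤ, (0:ℝ) < s ^ j := fun j => zpow_pos hs0 j
    have hxle : ‖x‖ ≤ 1 := by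
      rw [hxabs]
      calc s^(-m) * ‖w‖ ≤ s^(-m) * s^m :=
            mul_le_mul_of_nonneg_left hm2 (hspow _).le
        _ = 1 := by rw [← zpow_add₀ (ne_of_gt hs0)]; simp
    have hxgt : s < ‖x‖ := by
      rw [hxabs]
      calc s = s^(-m) * s^(m+1) := by
            rw [← zpow_add₀ (ne_of_gt hs0)]; simp
        _ < s^(-m) * ‖w‖ := by
            exact mul_lt_mul_of_pos_left hm1 (hspow _)
    have hxA : x ∈ A := by
      simp only [hAdef, Set.mem_preimage, Set.mem_Icc]
      exact ⟨hxgt.le, hxle⟩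
    have hwx : w = (q^2)^m * x := by
      rw [hxdef, ← mul_assoc, ← zpow_add₀ hq2]
      simp
    rcases le_or_gt 0 m with hm | hm
    · -- m ≥ 0
      obtain ⟨k, rfl⟩ := Int.eq_ofNat_of_zero_le hm
      have hwx' : w = (q^2)^k * x := by rw [hwx, zpow_natCast]
      have heq := iter k x hx0
      rw [← hwx'] at heq
      have hnorm : ‖H w‖ = (‖x‖)^k * r^(k*k) / c^k * ‖H x‖ := by
        rw [heq]
        rw [norm_mul, norm_div, norm_mul, norm_pow, norm_pow, norm_pow]
      rw [hnorm]
      have step1 : (‖x‖)^k * r^(k*k) / c^k * ‖H x‖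
          ≤ 1 * r^(k*k) / c^k * M' := by
        gcongr
        · exact pow_le_one₀ (norm_nonneg x) hxle
        · exact hMA x hxA
      have step2 : 1 * r^(k*k) / c^k * M' = M' * (r^(k*k) * (1/c)^k) := by
        rw [one_mul, one_div, inv_pow]
        ring
      calc (‖x‖)^k * r^(k*k) / c^k * ‖H x‖ ≤ 1 * r^(k*k) / c^k * M' := step1
        _ = M' * (r^(k*k) * (1/c)^k) := step2
        _ ≤ M' * B1 := mul_le_mul_of_nonneg_left (hB1' k) hM'0
        _ ≤ B := le_max_left _ _
    · -- m < 0
      obtain ⟨k, hk⟩ : ∃ k : ℕ, -m = (k:ℤ)+1 := ⟨(-m-1).toNat, by omega⟩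
      have hxw : x = (q^2)^(k+1) * w := by
        rw [hxdef, hk]
        norm_cast
      have heq := iter (k+1) w hw
      rw [← hxw] at heq
      have hnorm : ‖H x‖ = (‖w‖)^(k+1) * r^((k+1)*(k+1)) / c^(k+1) * ‖H w‖ := by
        rw [heq]
        rw [norm_mul, norm_div, norm_mul, norm_pow, norm_pow, norm_pow]
      -- lower bound on |w|
      have hwlow : (s^k)⁻¹ ≤ ‖w‖ := by
        have : s ^ (m+1) = (s^k)⁻¹ := by
          have h5 : m + 1 = -(k:ℤ) := by omega
          rw [h5, zpow_neg, zpow_natCast]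
        rw [← this]
        exact hm1.le
      have hslow : (0:ℝ) < (s^k)⁻¹ := by positivity
      have hwpow : ((s^(k*(k+1))):ℝ)⁻¹ ≤ (‖w‖)^(k+1) := by
        calc ((s^(k*(k+1))):ℝ)⁻¹ = ((s^k)⁻¹)^(k+1) := by
              rw [pow_mul]; exact (inv_pow _ _).symm
          _ ≤ (‖w‖)^(k+1) := pow_le_pow_left₀ hslow.le hwlow _
      have hHx : ‖H x‖ ≤ M' := hMA x hxA
      -- solve for ‖H w‖
      have hDpos : 0 < (‖w‖)^(k+1) * r^((k+1)*(k+1)) / c^(k+1) := by positivity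
      have hHw : ‖H w‖ = ‖H x‖ / ((‖w‖)^(k+1) * r^((k+1)*(k+1)) / c^(k+1)) := by
        rw [hnorm]
        field_simp
      have hD'pos : 0 < (s^(k*(k+1)))⁻¹ * r^((k+1)*(k+1)) / c^(k+1) := by positivity
      have hDge : (s^(k*(k+1)))⁻¹ * r^((k+1)*(k+1)) / c^(k+1)
          ≤ (‖w‖)^(k+1) * r^((k+1)*(k+1)) / c^(k+1) := by
        gcongr
      have step1 : ‖H w‖ ≤ M' / ((s^(k*(k+1)))⁻¹ * r^((k+1)*(k+1)) / c^(k+1)) := by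
        rw [hHw]
        exact div_le_div₀ hM'0 hHx hD'pos hDge
      have hpow : s^(k*(k+1)) * r = r^(k*k) * r^((k+1)*(k+1)) := by
        rw [hsdef, ← pow_mul, ← pow_succ, ← pow_add]
        congr 1
        ring
      have step2 : M' / ((s^(k*(k+1)))⁻¹ * r^((k+1)*(k+1)) / c^(k+1))
          = M' * c / r * (r^(k*k) * c^k) := by
        field_simp
        linear_combination (M' * c^(k+1)) * hpow
      calc ‖H w‖ ≤ M' / ((s^(k*(k+1)))⁻¹ * r^((k+1)*(k+1)) / c^(k+1)) := step1
        _ = M' * c / r * (r^(k*k) * c^k) := step2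
        _ ≤ M' * c / r * B2 := mul_le_mul_of_nonneg_left (hB2' k) (by positivity)
        _ ≤ B := le_max_right _ _
  -- removable singularity and Liouville
  have hd : DifferentiableOn ℂ H (Set.univ \ {0}) := fun w hw =>
    ((hH w (by simpa using hw.2)).differentiableAt).differentiableWithinAt
  have hbdd : BddAbove (norm ∘ H '' (Set.univ \ {0})) := by
    refine ⟨B, ?_⟩
    rintro v ⟨w, hw, rfl⟩
    exact hbound w (by simpa using hw.2)
  have hF := Complex.differentiableOn_update_limUnder_of_bddAbove Filter.univ_mem hd hbdd
  set F := Function.update H 0 (limUnder (𝓝[≠] (0:ℂ)) H) with hFdef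
  have hFdiff : Differentiable ℂ F := by
    rw [← differentiableOn_univ]; exact hF
  have hFeq : ∀ w : ℂ, w ≠ 0 → F w = H w := fun w hw => Function.update_of_ne hw _ _
  have hFb : ∀ w : ℂ, ‖F w‖ ≤ B := by
    intro w
    rcases eq_or_ne w 0 with rfl | hw
    · have h1 : Tendsto F (𝓝[≠] (0:ℂ)) (𝓝 (F 0)) :=
        (hFdiff.continuous.tendsto 0).mono_left nhdsWithin_le_nhds
      have h2 : ∀ᶠ u in 𝓝[≠] (0:ℂ), ‖F u‖ ≤ B := by
        filter_upwards [self_mem_nhdsWithin] with u hu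
        rw [hFeq u hu]; exact hbound u hu
      exact le_of_tendsto h1.norm h2
    · rw [hFeq w hw]; exact hbound w hw
  have hrange : IsBounded (Set.range F) := by
    rw [isBounded_iff_forall_norm_le]
    exact ⟨B, by rintro v ⟨w, rfl⟩; exact hFb w⟩
  have hconst := hFdiff.apply_eq_apply_of_bounded hrange
  set x0 : ℂ := 2*(y*z)/q with hx0def
  have hx0ne : x0 ≠ 0 := by
    rw [hx0def]
    exact div_ne_zero (mul_ne_zero two_ne_zero hyz) hq
  have hq2x0 : q^2 * x0 ≠ 0 := mul_ne_zero (pow_ne_zero _ hq) hx0ne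
  have hcoef : x0 * q / (y*z) = 2 := by
    rw [hx0def]
    field_simp
  have h3 : H (q^2 * x0) = 2 * H x0 := by rw [hfe x0 hx0ne, hcoef]
  have h4 : H (q^2 * x0) = H x0 := by
    rw [← hFeq _ hq2x0, ← hFeq _ hx0ne, hconst]
  have h5 : H x0 = 0 := by
    have h6 : H x0 = 2 * H x0 := h4.symm.trans h3
    linear_combination -h6
  intro x hx
  rw [← hFeq x hx, hconst x x0, hFeq x0 hx0ne, h5]
end

section
/- For |q|<|y|<1 and |q|<|z|<1, define F(x,y,z;q) := (∑_{s,t≥0} - ∑_{s,t<0}) q^{st} y^s z^t / (1 - x q^{s+t}) for x not an integral power of q. Then F, viewed as a meromorphic function of x on ℂ\{0\}, has at x_0 = q^n (n∈ℤ) a simple pole with residue ∑_{s=1}^{n-1} q^{s(n-s)+n} y^{-s} z^{-(n-s)} (using the convention that for n ≤ 0 the sum ∑_{s=1}^{n-1} equals -∑_{s=n}^{0}). -/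
open Complex Filter Topology

/-- Sum `∑_{r=a}^{b} f r` with the convention `∑_{r=a}^{b} := -∑_{r=b+1}^{a-1}` for `b < a`. -/
noncomputable def cSum (a b : ℤ) (f : ℤ → ℂ) : ℂ :=
  if a ≤ b then ∑ r ∈ Finset.Icc a b, f r else -∑ r ∈ Finset.Icc (b + 1) (a - 1), f r

/-- `F(x,y,z;q) = (∑_{s,t≥0} - ∑_{s,t<0}) q^{st} y^s z^t / (1 - x q^{s+t})`. -/
noncomputable def Fd (q x y z : ℂ) : ℂ :=
  (∑' p : ℕ × ℕ, q ^ (p.1 * p.2) * y ^ p.1 * z ^ p.2 / (1 - x * q ^ (p.1 + p.2)))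
  - ∑' p : ℕ × ℕ,
      q ^ ((p.1 + 1) * (p.2 + 1)) * y ^ (-(p.1 + 1 : ℤ)) * z ^ (-(p.2 + 1 : ℤ)) /
        (1 - x * q ^ (-(p.1 + p.2 + 2 : ℤ)))

noncomputable def Complex.abs : AbsoluteValue ℂ ℝ := NormedField.toAbsoluteValue ℂ

lemma Complex.norm_eq_abs (z : ℂ) : ‖z‖ = Complex.abs z := rfl

lemma one_sub_zpow_lb (q : ℂ) (h0 : 0 < Complex.abs q) (h1 : Complex.abs q < 1)
    (j : ℤ) (hj : j ≠ 0) :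
    min (1 - Complex.abs q) (1 / Complex.abs q - 1) ≤ Complex.abs (1 - q ^ j) := by
  set r := Complex.abs q with hr
  have h3 : Complex.abs (q ^ j) = r ^ j := map_zpow₀ Complex.abs q j
  have hn1 : Complex.abs (1 - q ^ j) = ‖(1 : ℂ) - q ^ j‖ := rfl
  rcases lt_or_gt_of_ne hj with hneg | hpos
  · have h2 : r ^ (-1 : ℤ) ≤ r ^ j :=
      zpow_le_zpow_right_of_le_one₀ h0 h1.le (by omega)
    have h4 : ‖q ^ j‖ - ‖(1:ℂ)‖ ≤ ‖q ^ j - 1‖ := norm_sub_norm_le _ _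
    have h5 : ‖q ^ j - 1‖ = ‖(1:ℂ) - q ^ j‖ := norm_sub_rev _ _
    have h6 : ‖q ^ j‖ = r ^ j := h3
    have h7 : r ^ (-1 : ℤ) = 1 / r := by simp [zpow_neg]
    rw [hn1]
    simp only [norm_one] at h4
    refine le_trans (min_le_right _ _) ?_
    rw [← h7]
    linarith [h5 ▸ h4, h6]
  · have h2 : r ^ j ≤ r ^ (1 : ℤ) :=
      zpow_le_zpow_right_of_le_one₀ h0 h1.le (by omega)
    have h4 : ‖(1:ℂ)‖ - ‖q ^ j‖ ≤ ‖(1:ℂ) - q ^ j‖ := norm_sub_norm_le _ _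
    simp only [norm_one] at h4
    rw [hn1]
    refine le_trans (min_le_left _ _) ?_
    have h6 : ‖q ^ j‖ = r ^ j := h3
    rw [zpow_one] at h2
    linarith [h6]

lemma zpow_diff_lb (q : ℂ) (h0 : 0 < Complex.abs q) (h1 : Complex.abs q < 1)
    (a b : ℤ) (hab : a ≠ b) :
    Complex.abs q ^ (min a b) * min (1 - Complex.abs q) (1 / Complex.abs q - 1)
      ≤ Complex.abs (q ^ a - q ^ b) := by
  have hq : q ≠ 0 := by
    intro h; rw [h] at h0; simp at h0
  wlog hlt : a < b generalizing a b
  · have h := this b a hab.symm (by omega)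
    have habs : Complex.abs (q ^ b - q ^ a) = Complex.abs (q ^ a - q ^ b) := by
      rw [← Complex.abs.map_neg (q ^ a - q ^ b)]; ring_nf
    rwa [min_comm, habs] at h
  have key : q ^ a - q ^ b = q ^ a * (1 - q ^ (b - a)) := by
    rw [mul_sub, mul_one, ← zpow_add₀ hq]
    ring_nf
  rw [key, map_mul, map_zpow₀, min_eq_left hlt.le]
  exact mul_le_mul_of_nonneg_left
    (one_sub_zpow_lb q h0 h1 (b - a) (by omega)) (zpow_nonneg h0.le a)

/-- modified summand for the first double sum -/
noncomputable def g1 (q y z : ℂ) (n : ℤ) (p : ℕ × ℕ) (x : ℂ) : ℂ :=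
  if ((p.1 : ℤ) + p.2 = -n) then -q ^ n * (q ^ (p.1 * p.2) * y ^ p.1 * z ^ p.2)
  else (x - q ^ n) * (q ^ (p.1 * p.2) * y ^ p.1 * z ^ p.2 / (1 - x * q ^ (p.1 + p.2)))

/-- modified summand for the second double sum -/
noncomputable def g2 (q y z : ℂ) (n : ℤ) (p : ℕ × ℕ) (x : ℂ) : ℂ :=
  if ((p.1 : ℤ) + p.2 + 2 = n) then
    -q ^ n * (q ^ ((p.1 + 1) * (p.2 + 1)) * y ^ (-(p.1 + 1 : ℤ)) * z ^ (-(p.2 + 1 : ℤ)))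
  else (x - q ^ n) *
    (q ^ ((p.1 + 1) * (p.2 + 1)) * y ^ (-(p.1 + 1 : ℤ)) * z ^ (-(p.2 + 1 : ℤ)) /
      (1 - x * q ^ (-(p.1 + p.2 + 2 : ℤ))))

set_option maxHeartbeats 2000000 in
/-- `F` has a simple pole at `x₀ = qⁿ` with residue `∑_{s=1}^{n-1} q^{s(n-s)+n} y^{-s} z^{-(n-s)}`. -/
theorem stmt16 (q y z : ℂ) (hq0 : 0 < ‖q‖) (hq1 : ‖q‖ < 1)
    (hqy : ‖q‖ < ‖y‖) (hy1 : ‖y‖ < 1)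
    (hqz : ‖q‖ < ‖z‖) (hz1 : ‖z‖ < 1) (n : ℤ) :
    Tendsto (fun x : ℂ => (x - q ^ n) * Fd q x y z) (𝓝[≠] (q ^ n))
      (𝓝 (cSum 1 (n - 1) (fun s => q ^ (s * (n - s) + n) * y ^ (-s) * z ^ (-(n - s))))) := by
  replace hq0 : 0 < Complex.abs q := hq0
  replace hq1 : Complex.abs q < 1 := hq1
  replace hqy : Complex.abs q < Complex.abs y := hqy
  replace hy1 : Complex.abs y < 1 := hy1
  replace hqz : Complex.abs q < Complex.abs z := hqz
  replace hz1 : Complex.abs z < 1 := hz1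
  have hq : q ≠ 0 := by intro h; rw [h] at hq0; simp at hq0
  have hy0 : y ≠ 0 := by intro h; rw [h] at hqy; simp at hqy; linarith
  have hz0 : z ≠ 0 := by intro h; rw [h] at hqz; simp at hqz; linarith
  set r : ℝ := Complex.abs q with hrdef
  set x₀ : ℂ := q ^ n with hx₀def
  set c₀ : ℝ := min (1 - r) (1 / r - 1) with hc₀def
  have hc₀pos : 0 < c₀ := by
    have h1 : (1 : ℝ) < 1 / r := by rw [lt_div_iff₀ hq0]; linarith
    exact lt_min (by linarith) (by linarith)
  set c₁ : ℝ := r ^ n * c₀ with hc₁def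
  have hc₁pos : 0 < c₁ := mul_pos (zpow_pos hq0 n) hc₀pos
  set m : ℝ := min c₀ c₁ with hmdef
  have hmpos : 0 < m := lt_min hc₀pos hc₁pos
  set ε : ℝ := m / 2 with hεdef
  have hεpos : 0 < ε := by positivity
  set S : Set ℂ := Metric.closedBall x₀ ε with hSdef
  -- uniform lower bound for the non-singular denominators on S
  have hden : ∀ k : ℤ, k ≠ -n → 0 ≤ k ∨ k ≤ -2 → ∀ x ∈ S,
      ε ≤ Complex.abs (1 - x * q ^ k) := by
    intro k hk hcase x hx
    have hxd : Complex.abs (x - x₀) ≤ ε := by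
      rw [Metric.mem_closedBall, Complex.dist_eq] at hx; exact hx
    rcases hcase with h0k | hk2
    · have hsplit : (1 : ℂ) - x * q ^ k = (1 - x₀ * q ^ k) - (x - x₀) * q ^ k := by ring
      have htri : Complex.abs (1 - x₀ * q ^ k) - Complex.abs ((x - x₀) * q ^ k)
          ≤ Complex.abs (1 - x * q ^ k) := by
        rw [hsplit]
        simpa [Complex.norm_eq_abs] using
          norm_sub_norm_le (1 - x₀ * q ^ k) ((x - x₀) * q ^ k)
      have hA : c₀ ≤ Complex.abs (1 - x₀ * q ^ k) := by
        have : x₀ * q ^ k = q ^ (n + k) := by rw [hx₀def, ← zpow_add₀ hq]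
        rw [this]
        exact one_sub_zpow_lb q hq0 hq1 (n + k) (by omega)
      have hB : Complex.abs ((x - x₀) * q ^ k) ≤ ε := by
        rw [map_mul, map_zpow₀]
        have hrk : r ^ k ≤ 1 := by
          have := zpow_le_zpow_right_of_le_one₀ hq0 hq1.le h0k
          simpa using this
        calc Complex.abs (x - x₀) * r ^ k ≤ ε * 1 :=
              mul_le_mul hxd hrk (zpow_nonneg hq0.le k) hεpos.le
          _ = ε := mul_one ε
      have hc₀m : m ≤ c₀ := min_le_left _ _
      have : c₀ - ε ≤ Complex.abs (1 - x * q ^ k) := by linarith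
      have hεc : ε ≤ c₀ - ε := by rw [hεdef]; linarith
      linarith
    · have hsplit : (1 : ℂ) - x * q ^ k = q ^ k * (q ^ (-k) - x) := by
        rw [mul_sub, ← zpow_add₀ hq]
        simp [mul_comm]
      rw [hsplit, map_mul, map_zpow₀]
      have h1 : Complex.abs (q ^ (-k) - x₀) - Complex.abs (x - x₀)
          ≤ Complex.abs (q ^ (-k) - x) := by
        have : q ^ (-k) - x = (q ^ (-k) - x₀) - (x - x₀) := by ring
        rw [this]
        simpa [Complex.norm_eq_abs] using norm_sub_norm_le (q ^ (-k) - x₀) (x - x₀)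
      have h2 : c₁ ≤ Complex.abs (q ^ (-k) - x₀) := by
        have hd := zpow_diff_lb q hq0 hq1 (-k) n (by omega)
        have hmin : r ^ n ≤ r ^ (min (-k) n) :=
          zpow_le_zpow_right_of_le_one₀ hq0 hq1.le (min_le_right _ _)
        rw [hc₁def]
        calc r ^ n * c₀ ≤ r ^ (min (-k) n) * c₀ :=
              mul_le_mul_of_nonneg_right hmin hc₀pos.le
          _ ≤ Complex.abs (q ^ (-k) - q ^ n) := hd
          _ = Complex.abs (q ^ (-k) - x₀) := by rw [hx₀def]
      have hrk : (1 : ℝ) ≤ r ^ k := by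
        have := zpow_le_zpow_right_of_le_one₀ hq0 hq1.le (show k ≤ 0 by omega)
        simpa using this
      have hc₁m : m ≤ c₁ := min_le_right _ _
      have h3 : ε ≤ Complex.abs (q ^ (-k) - x) := by
        have : c₁ - ε ≤ Complex.abs (q ^ (-k) - x) := by linarith
        have hεc : ε ≤ c₁ - ε := by rw [hεdef]; linarith
        linarith
      calc ε = 1 * ε := (one_mul ε).symm
        _ ≤ r ^ k * Complex.abs (q ^ (-k) - x) :=
            mul_le_mul hrk h3 hεpos.le (by positivity)
  set ay : ℝ := Complex.abs y with haydef
  set az : ℝ := Complex.abs z with hazdef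
  have hay0 : 0 < ay := lt_trans hq0 hqy
  have haz0 : 0 < az := lt_trans hq0 hqz
  set R : ℝ := Complex.abs x₀ with hRdef
  have hR0 : 0 ≤ R := Complex.abs.nonneg _
  set C : ℝ := R + 1 with hCdef
  -- bound for the first family
  have ha₁ : ∀ p : ℕ × ℕ, Complex.abs (q ^ (p.1 * p.2) * y ^ p.1 * z ^ p.2)
      ≤ ay ^ p.1 * az ^ p.2 := by
    intro p
    rw [map_mul, map_mul, map_pow, map_pow, map_pow]
    have h1 : r ^ (p.1 * p.2) ≤ 1 := pow_le_one₀ hq0.le hq1.le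
    have h2 : (0:ℝ) ≤ ay ^ p.1 * az ^ p.2 := by positivity
    nlinarith [pow_nonneg hq0.le (p.1 * p.2)]
  have hg1b : ∀ p : ℕ × ℕ, ∀ x ∈ S,
      ‖g1 q y z n p x‖ ≤ C * (ay ^ p.1 * az ^ p.2) := by
    intro p x hx
    have hbase : (0:ℝ) ≤ ay ^ p.1 * az ^ p.2 := by positivity
    rw [Complex.norm_eq_abs, g1]
    split_ifs with hsing
    · rw [map_mul, map_neg_eq_map]
      calc Complex.abs (q ^ n) * Complex.abs (q ^ (p.1*p.2) * y ^ p.1 * z ^ p.2)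
          ≤ R * (ay ^ p.1 * az ^ p.2) :=
            mul_le_mul le_rfl (ha₁ p) (Complex.abs.nonneg _) hR0
        _ ≤ C * (ay ^ p.1 * az ^ p.2) := by
            apply mul_le_mul_of_nonneg_right _ hbase
            rw [hCdef]; linarith
    · have hd : ε ≤ Complex.abs (1 - x * q ^ (p.1 + p.2)) := by
        have hk := hden ((p.1 + p.2 : ℕ) : ℤ) (by push_cast at hsing ⊢; omega)
          (Or.inl (by positivity)) x hx
        rwa [zpow_natCast] at hk
      have hd0 : (0:ℝ) < Complex.abs (1 - x * q ^ (p.1 + p.2)) := lt_of_lt_of_le hεpos hd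
      rw [map_mul, map_div₀]
      have hxd : Complex.abs (x - x₀) ≤ ε := by
        rw [hSdef, Metric.mem_closedBall, Complex.dist_eq] at hx; exact hx
      calc Complex.abs (x - q ^ n) *
            (Complex.abs (q ^ (p.1*p.2) * y ^ p.1 * z ^ p.2) / Complex.abs (1 - x * q ^ (p.1+p.2)))
          ≤ ε * ((ay ^ p.1 * az ^ p.2) / ε) := by
            apply mul_le_mul hxd _ (by positivity) hεpos.le
            calc Complex.abs (q ^ (p.1*p.2) * y ^ p.1 * z ^ p.2) /
                  Complex.abs (1 - x * q ^ (p.1+p.2))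
                ≤ (ay ^ p.1 * az ^ p.2) / Complex.abs (1 - x * q ^ (p.1+p.2)) := by
                  exact div_le_div_of_nonneg_right (ha₁ p) hd0.le
              _ ≤ (ay ^ p.1 * az ^ p.2) / ε := div_le_div_of_nonneg_left hbase hεpos hd
        _ = ay ^ p.1 * az ^ p.2 := by field_simp
        _ ≤ C * (ay ^ p.1 * az ^ p.2) := by
            apply le_mul_of_one_le_left hbase; rw [hCdef]; linarith
  set K : ℝ := r / (ay * az) with hKdef
  have hK0 : 0 < K := by positivity
  have ha₂ : ∀ p : ℕ × ℕ,
      Complex.abs (q ^ ((p.1+1) * (p.2+1)) * y ^ (-(p.1+1:ℤ)) * z ^ (-(p.2+1:ℤ)))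
      ≤ K * ((r/ay) ^ p.1 * (r/az) ^ p.2) := by
    intro p
    rw [map_mul, map_mul, map_pow, map_zpow₀, map_zpow₀]
    have h1 : Complex.abs y ^ (-(p.1+1:ℤ)) = (ay ^ (p.1+1))⁻¹ := by
      rw [zpow_neg, ← haydef]; norm_cast
    have h2 : Complex.abs z ^ (-(p.2+1:ℤ)) = (az ^ (p.2+1))⁻¹ := by
      rw [zpow_neg, ← hazdef]; norm_cast
    rw [h1, h2, ← hrdef]
    have h3 : r ^ ((p.1+1) * (p.2+1)) ≤ r ^ (p.1 + p.2 + 1) :=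
      pow_le_pow_of_le_one hq0.le hq1.le (by nlinarith)
    have hEqK : K * ((r/ay) ^ p.1 * (r/az) ^ p.2)
        = r ^ (p.1 + p.2 + 1) * (ay ^ (p.1+1))⁻¹ * (az ^ (p.2+1))⁻¹ := by
      rw [hKdef, div_pow, div_pow]
      field_simp
      ring
    rw [hEqK]
    have h4 : (0:ℝ) ≤ (ay ^ (p.1+1))⁻¹ * (az ^ (p.2+1))⁻¹ := by positivity
    calc r ^ ((p.1+1) * (p.2+1)) * (ay ^ (p.1+1))⁻¹ * (az ^ (p.2+1))⁻¹
        = r ^ ((p.1+1) * (p.2+1)) * ((ay ^ (p.1+1))⁻¹ * (az ^ (p.2+1))⁻¹) := by ring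
      _ ≤ r ^ (p.1 + p.2 + 1) * ((ay ^ (p.1+1))⁻¹ * (az ^ (p.2+1))⁻¹) :=
          mul_le_mul_of_nonneg_right h3 h4
      _ = r ^ (p.1 + p.2 + 1) * (ay ^ (p.1+1))⁻¹ * (az ^ (p.2+1))⁻¹ := by ring
  have hg2b : ∀ p : ℕ × ℕ, ∀ x ∈ S,
      ‖g2 q y z n p x‖ ≤ C * K * ((r/ay) ^ p.1 * (r/az) ^ p.2) := by
    intro p x hx
    have hbase : (0:ℝ) ≤ (r/ay) ^ p.1 * (r/az) ^ p.2 := by positivity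
    rw [Complex.norm_eq_abs, g2]
    split_ifs with hsing
    · rw [map_mul, map_neg_eq_map]
      calc Complex.abs (q ^ n) *
            Complex.abs (q ^ ((p.1+1)*(p.2+1)) * y ^ (-(p.1+1:ℤ)) * z ^ (-(p.2+1:ℤ)))
          ≤ R * (K * ((r/ay) ^ p.1 * (r/az) ^ p.2)) :=
            mul_le_mul le_rfl (ha₂ p) (Complex.abs.nonneg _) hR0
        _ = R * K * ((r/ay) ^ p.1 * (r/az) ^ p.2) := by ring
        _ ≤ C * K * ((r/ay) ^ p.1 * (r/az) ^ p.2) := by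
            apply mul_le_mul_of_nonneg_right _ hbase
            apply mul_le_mul_of_nonneg_right _ hK0.le
            rw [hCdef]; linarith
    · have hd : ε ≤ Complex.abs (1 - x * q ^ (-(p.1 + p.2 + 2 : ℤ))) :=
        hden (-(p.1 + p.2 + 2 : ℤ)) (by push_cast at hsing ⊢; omega)
          (Or.inr (by push_cast; omega)) x hx
      have hd0 : (0:ℝ) < Complex.abs (1 - x * q ^ (-(p.1 + p.2 + 2 : ℤ))) :=
        lt_of_lt_of_le hεpos hd
      rw [map_mul, map_div₀]
      have hxd : Complex.abs (x - x₀) ≤ ε := by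
        rw [hSdef, Metric.mem_closedBall, Complex.dist_eq] at hx; exact hx
      calc Complex.abs (x - q ^ n) *
            (Complex.abs (q ^ ((p.1+1)*(p.2+1)) * y ^ (-(p.1+1:ℤ)) * z ^ (-(p.2+1:ℤ))) /
              Complex.abs (1 - x * q ^ (-(p.1 + p.2 + 2 : ℤ))))
          ≤ ε * ((K * ((r/ay) ^ p.1 * (r/az) ^ p.2)) / ε) := by
            apply mul_le_mul hxd _ (by positivity) hεpos.le
            calc Complex.abs (q ^ ((p.1+1)*(p.2+1)) * y ^ (-(p.1+1:ℤ)) * z ^ (-(p.2+1:ℤ))) /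
                  Complex.abs (1 - x * q ^ (-(p.1 + p.2 + 2 : ℤ)))
                ≤ (K * ((r/ay) ^ p.1 * (r/az) ^ p.2)) /
                  Complex.abs (1 - x * q ^ (-(p.1 + p.2 + 2 : ℤ))) :=
                  div_le_div_of_nonneg_right (ha₂ p) hd0.le
              _ ≤ (K * ((r/ay) ^ p.1 * (r/az) ^ p.2)) / ε :=
                  div_le_div_of_nonneg_left (by positivity) hεpos hd
        _ = K * ((r/ay) ^ p.1 * (r/az) ^ p.2) := by field_simp
        _ ≤ C * K * ((r/ay) ^ p.1 * (r/az) ^ p.2) := by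
            rw [mul_assoc]
            apply le_mul_of_one_le_left (by positivity); rw [hCdef]; linarith
  have hsum1 : Summable (fun p : ℕ × ℕ => C * (ay ^ p.1 * az ^ p.2)) :=
    (Summable.mul_of_nonneg (summable_geometric_of_lt_one hay0.le hy1)
      (summable_geometric_of_lt_one haz0.le hz1)
      (fun i => by positivity) (fun i => by positivity)).mul_left C
  have hsum2 : Summable (fun p : ℕ × ℕ => C * K * ((r/ay) ^ p.1 * (r/az) ^ p.2)) := by
    have hα : r / ay < 1 := (div_lt_one hay0).2 hqy
    have hβ : r / az < 1 := (div_lt_one haz0).2 hqz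
    exact (Summable.mul_of_nonneg (summable_geometric_of_lt_one (by positivity) hα)
      (summable_geometric_of_lt_one (by positivity) hβ)
      (fun i => by positivity) (fun i => by positivity)).mul_left (C * K)
  have hg1cont : ∀ p : ℕ × ℕ, ContinuousOn (g1 q y z n p) S := by
    intro p
    unfold g1
    split_ifs with hsing
    · exact continuousOn_const
    · apply ContinuousOn.mul (continuousOn_id.sub continuousOn_const)
      apply ContinuousOn.div continuousOn_const
      · exact (continuous_const.sub (continuous_id.mul continuous_const)).continuousOn
      · intro x hx
        have hk := hden ((p.1 + p.2 : ℕ) : ℤ) (by push_cast at hsing ⊢; omega)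
          (Or.inl (by positivity)) x hx
        rw [zpow_natCast] at hk
        intro h0
        rw [h0] at hk; simp at hk; linarith
  have hg2cont : ∀ p : ℕ × ℕ, ContinuousOn (g2 q y z n p) S := by
    intro p
    unfold g2
    split_ifs with hsing
    · exact continuousOn_const
    · apply ContinuousOn.mul (continuousOn_id.sub continuousOn_const)
      apply ContinuousOn.div continuousOn_const
      · exact (continuous_const.sub (continuous_id.mul continuous_const)).continuousOn
      · intro x hx
        have hk := hden (-(p.1 + p.2 + 2 : ℤ)) (by omega) (Or.inr (by omega)) x hx
        intro h0
        rw [h0] at hk; simp at hk; linarith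
  have hcont1 : ContinuousOn (fun x => ∑' p : ℕ × ℕ, g1 q y z n p x) S :=
    (tendstoUniformlyOn_tsum hsum1 (fun p x hx => hg1b p x hx)).continuousOn
      (Filter.Eventually.of_forall (f := atTop) fun t =>
        continuousOn_finset_sum t fun p _ => hg1cont p).frequently
  have hcont2 : ContinuousOn (fun x => ∑' p : ℕ × ℕ, g2 q y z n p x) S :=
    (tendstoUniformlyOn_tsum hsum2 (fun p x hx => hg2b p x hx)).continuousOn
      (Filter.Eventually.of_forall (f := atTop) fun t =>
        continuousOn_finset_sum t fun p _ => hg2cont p).frequently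
  have hcontG : ContinuousOn
      (fun x => (∑' p : ℕ × ℕ, g1 q y z n p x) - ∑' p : ℕ × ℕ, g2 q y z n p x) S :=
    hcont1.sub hcont2
  have hEq : ∀ x ∈ S, x ≠ x₀ → (x - x₀) * Fd q x y z
      = (∑' p : ℕ × ℕ, g1 q y z n p x) - ∑' p : ℕ × ℕ, g2 q y z n p x := by
    intro x hxS hxne
    have hxne' : x - q ^ n ≠ 0 := sub_ne_zero.mpr hxne
    rw [Fd, mul_sub, ← tsum_mul_left, ← tsum_mul_left]
    refine congrArg₂ (· - ·) (tsum_congr fun p => ?_) (tsum_congr fun p => ?_)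
    · rw [g1]
      split_ifs with hsing
      · have hcast : ((p.1 + p.2 : ℕ) : ℤ) = -n := by push_cast; omega
        have hpow : q ^ (p.1 + p.2) = q ^ (-n : ℤ) := by
          rw [← zpow_natCast q (p.1 + p.2), hcast]
        rw [hpow]
        have hd : (1 : ℂ) - x * q ^ (-n : ℤ) = q ^ (-n : ℤ) * (q ^ n - x) := by
          rw [mul_sub, ← zpow_add₀ hq]; simp [mul_comm]
        rw [hd]
        have hqn : (q : ℂ) ^ (-n : ℤ) ≠ 0 := zpow_ne_zero _ hq
        have hxx : q ^ n - x ≠ 0 := fun h => hxne' (by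
          have : x = q ^ n := by linear_combination -h
          simp [this])
        field_simp
        have hqq : q ^ (-n) * q ^ n = 1 := by rw [← zpow_add₀ hq]; simp
        rw [hx₀def]; linear_combination (q ^ n - x) * hqq
      · rfl
    · rw [g2]
      split_ifs with hsing
      · have hpow : q ^ (-(p.1 + p.2 + 2 : ℤ)) = q ^ (-n : ℤ) := by
          have h2 : -(p.1 + p.2 + 2 : ℤ) = -n := by omega
          rw [h2]
        rw [hpow]
        have hd : (1 : ℂ) - x * q ^ (-n : ℤ) = q ^ (-n : ℤ) * (q ^ n - x) := by
          rw [mul_sub, ← zpow_add₀ hq]; simp [mul_comm]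
        rw [hd]
        have hqn : (q : ℂ) ^ (-n : ℤ) ≠ 0 := zpow_ne_zero _ hq
        have hxx : q ^ n - x ≠ 0 := fun h => hxne' (by
          have : x = q ^ n := by linear_combination -h
          simp [this])
        field_simp
        have hqq : q ^ (-n) * q ^ n = 1 := by rw [← zpow_add₀ hq]; simp
        rw [hx₀def]; linear_combination (q ^ n - x) * hqq
      · rfl
  have hg1zero : ∀ p : ℕ × ℕ, ¬((p.1:ℤ) + p.2 = -n) → g1 q y z n p x₀ = 0 := by
    intro p h; rw [g1, if_neg h, hx₀def, sub_self, zero_mul]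
  have hg2zero : ∀ p : ℕ × ℕ, ¬((p.1:ℤ) + p.2 + 2 = n) → g2 q y z n p x₀ = 0 := by
    intro p h; rw [g2, if_neg h, hx₀def, sub_self, zero_mul]
  have hval : (∑' p : ℕ × ℕ, g1 q y z n p x₀) - (∑' p : ℕ × ℕ, g2 q y z n p x₀)
      = cSum 1 (n - 1) (fun s => q ^ (s * (n - s) + n) * y ^ (-s) * z ^ (-(n - s))) := by
    rcases le_or_gt n 0 with hn | hn
    · -- n ≤ 0
      have hT2 : (∑' p : ℕ × ℕ, g2 q y z n p x₀) = 0 := by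
        rw [show (fun p : ℕ × ℕ => g2 q y z n p x₀) = (fun _ => 0) from
          funext fun p => hg2zero p (by omega)]
        exact tsum_zero
      have hT1 : (∑' p : ℕ × ℕ, g1 q y z n p x₀)
          = ∑ p ∈ Finset.HasAntidiagonal.antidiagonal (-n).toNat,
              -q ^ n * (q ^ (p.1 * p.2) * y ^ p.1 * z ^ p.2) := by
        have hz : ∀ p : ℕ × ℕ, p ∉ Finset.HasAntidiagonal.antidiagonal (-n).toNat → g1 q y z n p x₀ = 0 := by
          intro p hp
          rw [Finset.HasAntidiagonal.mem_antidiagonal] at hp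
          exact hg1zero p (by omega)
        rw [tsum_eq_sum hz]
        refine Finset.sum_congr rfl fun p hp => ?_
        rw [Finset.HasAntidiagonal.mem_antidiagonal] at hp
        rw [g1, if_pos (by omega)]
      rw [hT1, hT2, sub_zero, cSum, if_neg (by omega)]
      have h0 : (1 : ℤ) - 1 = 0 := by ring
      have h1 : (n - 1) + 1 = n := by ring
      rw [h0, h1]
      have hneg : ∑ p ∈ Finset.HasAntidiagonal.antidiagonal (-n).toNat,
            -q ^ n * (q ^ (p.1 * p.2) * y ^ p.1 * z ^ p.2)
          = -∑ p ∈ Finset.HasAntidiagonal.antidiagonal (-n).toNat,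
              q ^ n * (q ^ (p.1 * p.2) * y ^ p.1 * z ^ p.2) := by
        rw [← Finset.sum_neg_distrib]
        exact Finset.sum_congr rfl fun p _ => by ring
      rw [hneg]
      congr 1
      refine Finset.sum_nbij' (fun p => -(p.1 : ℤ)) (fun s => ((-s).toNat, (s - n).toNat))
        ?_ ?_ ?_ ?_ ?_
      · intro p hp; simp only [Finset.HasAntidiagonal.mem_antidiagonal] at hp; simp only [Finset.mem_Icc]; omega
      · intro a ha; simp only [Finset.mem_Icc] at ha; simp only [Finset.HasAntidiagonal.mem_antidiagonal]; omega
      · intro p hp; simp only [Finset.HasAntidiagonal.mem_antidiagonal] at hp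
        ext <;> simp <;> omega
      · intro a ha; simp only [Finset.mem_Icc] at ha; simp; omega
      · intro p hp; simp only [Finset.HasAntidiagonal.mem_antidiagonal] at hp
        have h2 : n - -(p.1 : ℤ) = -(p.2 : ℤ) := by omega
        show q ^ n * (q ^ (p.1 * p.2) * y ^ p.1 * z ^ p.2)
          = q ^ ((-(p.1:ℤ)) * (n - (-(p.1:ℤ))) + n) * y ^ (-(-(p.1:ℤ))) * z ^ (-(n - (-(p.1:ℤ))))
        rw [h2]
        have he : (-(p.1:ℤ)) * (-(p.2:ℤ)) + n = ((p.1 * p.2 : ℕ) : ℤ) + n := by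
          push_cast; ring
        rw [he, zpow_add₀ hq, neg_neg, neg_neg, zpow_natCast, zpow_natCast, zpow_natCast]
        ring
    · rcases lt_or_ge n 2 with hn2 | hn2
      · -- n = 1
        have hn1 : n = 1 := by omega
        subst hn1
        have hT1 : (∑' p : ℕ × ℕ, g1 q y z 1 p x₀) = 0 := by
          rw [show (fun p : ℕ × ℕ => g1 q y z 1 p x₀) = (fun _ => 0) from
            funext fun p => hg1zero p (by omega)]
          exact tsum_zero
        have hT2 : (∑' p : ℕ × ℕ, g2 q y z 1 p x₀) = 0 := by
          rw [show (fun p : ℕ × ℕ => g2 q y z 1 p x₀) = (fun _ => 0) from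
            funext fun p => hg2zero p (by omega)]
          exact tsum_zero
        rw [hT1, hT2, sub_zero, cSum, if_neg (by omega)]
        rw [show ((1:ℤ) - 1 + 1) = 1 from by ring, show ((1:ℤ) - 1) = 0 from by ring]
        rw [Finset.Icc_eq_empty (by omega), Finset.sum_empty, neg_zero]
      · -- n ≥ 2
        have hT1 : (∑' p : ℕ × ℕ, g1 q y z n p x₀) = 0 := by
          rw [show (fun p : ℕ × ℕ => g1 q y z n p x₀) = (fun _ => 0) from
            funext fun p => hg1zero p (by omega)]
          exact tsum_zero
        have hT2 : (∑' p : ℕ × ℕ, g2 q y z n p x₀)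
            = ∑ p ∈ Finset.HasAntidiagonal.antidiagonal (n - 2).toNat,
                -q ^ n * (q ^ ((p.1 + 1) * (p.2 + 1)) * y ^ (-(p.1 + 1:ℤ)) * z ^ (-(p.2 + 1:ℤ))) := by
          have hz : ∀ p : ℕ × ℕ, p ∉ Finset.HasAntidiagonal.antidiagonal (n - 2).toNat → g2 q y z n p x₀ = 0 := by
            intro p hp
            rw [Finset.HasAntidiagonal.mem_antidiagonal] at hp
            exact hg2zero p (by omega)
          rw [tsum_eq_sum hz]
          refine Finset.sum_congr rfl fun p hp => ?_
          rw [Finset.HasAntidiagonal.mem_antidiagonal] at hp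
          rw [g2, if_pos (by omega)]
        rw [hT1, hT2, zero_sub, ← Finset.sum_neg_distrib, cSum, if_pos (by omega)]
        refine Finset.sum_nbij' (fun p => (p.1 : ℤ) + 1) (fun s => ((s - 1).toNat, (n - 1 - s).toNat))
          ?_ ?_ ?_ ?_ ?_
        · intro p hp; simp only [Finset.HasAntidiagonal.mem_antidiagonal] at hp; simp only [Finset.mem_Icc]; omega
        · intro a ha; simp only [Finset.mem_Icc] at ha; simp only [Finset.HasAntidiagonal.mem_antidiagonal]; omega
        · intro p hp; simp only [Finset.HasAntidiagonal.mem_antidiagonal] at hp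
          ext <;> simp <;> omega
        · intro a ha; simp only [Finset.mem_Icc] at ha; simp; omega
        · intro p hp; simp only [Finset.HasAntidiagonal.mem_antidiagonal] at hp
          have h2 : n - ((p.1 : ℤ) + 1) = (p.2 : ℤ) + 1 := by omega
          show -(-q ^ n * (q ^ ((p.1+1) * (p.2+1)) * y ^ (-(p.1 + 1:ℤ)) * z ^ (-(p.2 + 1:ℤ)))) = _
          rw [h2]
          have he : ((p.1:ℤ) + 1) * ((p.2:ℤ) + 1) + n = (((p.1+1) * (p.2+1) : ℕ) : ℤ) + n := by
            push_cast; ring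
          rw [he, zpow_add₀ hq, zpow_natCast]
          push_cast
          ring
  have hSnhds : S ∈ 𝓝 x₀ := by
    rw [hSdef]; exact Metric.closedBall_mem_nhds x₀ hεpos
  have hct : ContinuousAt
      (fun x => (∑' p : ℕ × ℕ, g1 q y z n p x) - ∑' p : ℕ × ℕ, g2 q y z n p x) x₀ :=
    hcontG.continuousAt hSnhds
  have htend : Tendsto
      (fun x => (∑' p : ℕ × ℕ, g1 q y z n p x) - ∑' p : ℕ × ℕ, g2 q y z n p x)
      (𝓝[≠] x₀)
      (𝓝 (cSum 1 (n - 1) (fun s => q ^ (s * (n - s) + n) * y ^ (-s) * z ^ (-(n - s))))) := by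
    rw [← hval]
    exact hct.tendsto.mono_left nhdsWithin_le_nhds
  refine htend.congr' ?_
  filter_upwards [self_mem_nhdsWithin, nhdsWithin_le_nhds hSnhds] with x hx1 hx2
  exact (hEq x hx2 hx1).symm
end
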